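/- Let p₀ ∈ (0,1). For each N ∈ ℕ let n_N, m_N, r_N be natural numbers with n_N + m_N + r_N = N and let ρ_{N,1},…,ρ_{N,r_N} ∈ [0,1]; define the survival likelihood L_N(p) = p^{n_N} (1−p)^{m_N} ∏_{i=1}^{r_N} (1 − ρ_{N,i} p) for p ∈ [0,1]. Assume n_N/N → p₀ and r_N/N → 0 as N → ∞. Then any sequence (p̂_N) in [0,1] satisfying L_N(p̂_N) = sup_{p ∈ [0,1]} L_N(p) for every N converges to p₀. -/

import Mathlib

open Filter

/-- Strict uniqueness of the maximizer of `q ↦ q^p₀ (1-q)^(1-p₀)` on `[0,1]`. -/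
lemma stmt_6_aux (p₀ : ℝ) (hp₀ : p₀ ∈ Set.Ioo (0:ℝ) 1) (q : ℝ)
    (hq : q ∈ Set.Icc (0:ℝ) 1) (hne : q ≠ p₀) :
    q ^ p₀ * (1 - q) ^ (1 - p₀) < p₀ ^ p₀ * (1 - p₀) ^ (1 - p₀) := by
  obtain ⟨hp0, hp1⟩ := hp₀
  have hp0' : (0:ℝ) < 1 - p₀ := by linarith
  have hRpos : 0 < p₀ ^ p₀ * (1 - p₀) ^ (1 - p₀) :=
    mul_pos (Real.rpow_pos_of_pos hp0 _) (Real.rpow_pos_of_pos hp0' _)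
  rcases eq_or_lt_of_le hq.1 with h0 | h0
  · rw [← h0, Real.zero_rpow (ne_of_gt hp0), zero_mul]; exact hRpos
  rcases eq_or_lt_of_le hq.2 with h1 | h1
  · rw [h1, sub_self, Real.zero_rpow (ne_of_gt hp0'), mul_zero]; exact hRpos
  have hq1 : (0:ℝ) < 1 - q := by linarith
  -- strict Jensen for log
  have hx : q / p₀ ∈ Set.Ioi (0:ℝ) := div_pos h0 hp0
  have hy : (1 - q) / (1 - p₀) ∈ Set.Ioi (0:ℝ) := div_pos hq1 hp0'
  have hxy : q / p₀ ≠ (1 - q) / (1 - p₀) := by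
    intro h
    rw [div_eq_div_iff (ne_of_gt hp0) (ne_of_gt hp0')] at h
    apply hne; nlinarith
  have hjensen := strictConcaveOn_log_Ioi.2 hx hy hxy hp0 hp0' (by ring)
  have hcomb : p₀ • (q / p₀) + (1 - p₀) • ((1 - q) / (1 - p₀)) = 1 := by
    simp only [smul_eq_mul]
    field_simp
    ring
  rw [hcomb, Real.log_one] at hjensen
  have hlx : Real.log (q / p₀) = Real.log q - Real.log p₀ :=
    Real.log_div (ne_of_gt h0) (ne_of_gt hp0)
  have hly : Real.log ((1 - q) / (1 - p₀)) = Real.log (1 - q) - Real.log (1 - p₀) :=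
    Real.log_div (ne_of_gt hq1) (ne_of_gt hp0')
  have hkey : p₀ * Real.log q + (1 - p₀) * Real.log (1 - q) <
      p₀ * Real.log p₀ + (1 - p₀) * Real.log (1 - p₀) := by
    simp only [smul_eq_mul, hlx, hly] at hjensen
    nlinarith
  have e1 : q ^ p₀ * (1 - q) ^ (1 - p₀) =
      Real.exp (p₀ * Real.log q + (1 - p₀) * Real.log (1 - q)) := by
    rw [Real.rpow_def_of_pos h0, Real.rpow_def_of_pos hq1, ← Real.exp_add]
    ring_nf
  have e2 : p₀ ^ p₀ * (1 - p₀) ^ (1 - p₀) =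
      Real.exp (p₀ * Real.log p₀ + (1 - p₀) * Real.log (1 - p₀)) := by
    rw [Real.rpow_def_of_pos hp0, Real.rpow_def_of_pos hp0', ← Real.exp_add]
    ring_nf
  rw [e1, e2]
  exact Real.exp_lt_exp.2 hkey

/-- Deterministic core of Lemma 5.1(2): consistency of the maximum likelihood
estimator of the toxicity probability under the survival likelihood when the
fraction of pending outcomes vanishes. -/
theorem stmt_6 (p₀ : ℝ) (hp₀ : p₀ ∈ Set.Ioo (0:ℝ) 1)
    (n m r : ℕ → ℕ) (hsum : ∀ N, n N + m N + r N = N)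
    (ρ : (N : ℕ) → Fin (r N) → ℝ) (hρ : ∀ N i, ρ N i ∈ Set.Icc (0:ℝ) 1)
    (L : ℕ → ℝ → ℝ)
    (hL : ∀ N p, L N p = p ^ n N * (1 - p) ^ m N * ∏ i, (1 - ρ N i * p))
    (hn : Tendsto (fun N => (n N : ℝ) / N) atTop (nhds p₀))
    (hr : Tendsto (fun N => (r N : ℝ) / N) atTop (nhds 0))
    (phat : ℕ → ℝ) (hmem : ∀ N, phat N ∈ Set.Icc (0:ℝ) 1)
    (hmax : ∀ N, L N (phat N) = sSup (L N '' Set.Icc (0:ℝ) 1)) :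
    Tendsto phat atTop (nhds p₀) := by
  obtain ⟨hp0, hp1⟩ := hp₀
  have hp0' : (0:ℝ) < 1 - p₀ := by linarith
  -- Step 1: nat-power inequality
  have key : ∀ N, p₀ ^ n N * (1 - p₀) ^ (m N + r N) ≤
      phat N ^ n N * (1 - phat N) ^ m N := by
    intro N
    obtain ⟨hph0, hph1⟩ := hmem N
    have hph1' : 0 ≤ 1 - phat N := by linarith
    -- L N p₀ ≤ L N (phat N)
    have hbdd : BddAbove (L N '' Set.Icc (0:ℝ) 1) := by
      refine ⟨1, ?_⟩
      rintro _ ⟨p, ⟨hpl, hpu⟩, rfl⟩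
      rw [hL]
      have h1 : p ^ n N ≤ 1 := pow_le_one₀ hpl hpu
      have h2 : (1 - p) ^ m N ≤ 1 := pow_le_one₀ (by linarith) (by linarith)
      have h3 : (∏ i, (1 - ρ N i * p)) ≤ 1 := by
        apply Finset.prod_le_one
        · intro i _
          have := (hρ N i).1; have := (hρ N i).2
          nlinarith
        · intro i _
          have := (hρ N i).1
          nlinarith
      have h0a : 0 ≤ p ^ n N := pow_nonneg hpl _
      have h0b : 0 ≤ (1 - p) ^ m N := pow_nonneg (by linarith) _
      have h0c : 0 ≤ ∏ i, (1 - ρ N i * p) := by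
        apply Finset.prod_nonneg
        intro i _
        have := (hρ N i).1; have := (hρ N i).2
        nlinarith
      calc p ^ n N * (1 - p) ^ m N * ∏ i, (1 - ρ N i * p)
          ≤ 1 * 1 * 1 := by
            apply mul_le_mul (mul_le_mul h1 h2 h0b (by linarith)) h3 h0c (by norm_num)
        _ = 1 := by norm_num
    have hle : L N p₀ ≤ L N (phat N) := by
      rw [hmax N]
      exact le_csSup hbdd ⟨p₀, ⟨le_of_lt hp0, le_of_lt hp1⟩, rfl⟩
    -- lower bound for L N p₀
    have hlow : p₀ ^ n N * (1 - p₀) ^ (m N + r N) ≤ L N p₀ := by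
      rw [hL, pow_add, mul_assoc]
      apply mul_le_mul_of_nonneg_left _ (pow_nonneg (le_of_lt hp0) _)
      apply mul_le_mul_of_nonneg_left _ (pow_nonneg (le_of_lt hp0') _)
      calc (1 - p₀) ^ r N = ∏ _i : Fin (r N), (1 - p₀) := by
            rw [Finset.prod_const, Finset.card_univ, Fintype.card_fin]
        _ ≤ ∏ i, (1 - ρ N i * p₀) := by
            apply Finset.prod_le_prod
            · intro i _; linarith
            · intro i _
              have := (hρ N i).2
              nlinarith
    -- upper bound for L N (phat N)
    have hup : L N (phat N) ≤ phat N ^ n N * (1 - phat N) ^ m N := by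
      rw [hL]
      have h3 : (∏ i, (1 - ρ N i * phat N)) ≤ 1 := by
        apply Finset.prod_le_one
        · intro i _
          have := (hρ N i).1; have := (hρ N i).2
          nlinarith
        · intro i _
          have := (hρ N i).1
          nlinarith
      calc phat N ^ n N * (1 - phat N) ^ m N * ∏ i, (1 - ρ N i * phat N)
          ≤ phat N ^ n N * (1 - phat N) ^ m N * 1 := by
            apply mul_le_mul_of_nonneg_left h3
            exact mul_nonneg (pow_nonneg hph0 _) (pow_nonneg hph1' _)
        _ = phat N ^ n N * (1 - phat N) ^ m N := by ring
    linarith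
  -- Step 2: rpow inequality for N ≥ 1
  have keyR : ∀ N : ℕ, 1 ≤ N →
      p₀ ^ ((n N : ℝ)/N) * (1 - p₀) ^ (((m N : ℝ) + r N)/N) ≤
      phat N ^ ((n N : ℝ)/N) * (1 - phat N) ^ ((m N : ℝ)/N) := by
    intro N hN
    obtain ⟨hph0, hph1⟩ := hmem N
    have hph1' : 0 ≤ 1 - phat N := by linarith
    have hNpos : (0:ℝ) < N := by exact_mod_cast hN
    have hinv : (0:ℝ) ≤ (N:ℝ)⁻¹ := by positivity
    have hlhs0 : 0 ≤ p₀ ^ n N * (1 - p₀) ^ (m N + r N) :=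
      mul_nonneg (pow_nonneg (le_of_lt hp0) _) (pow_nonneg (le_of_lt hp0') _)
    have := Real.rpow_le_rpow hlhs0 (key N) hinv
    have ea : ∀ (a : ℝ) (k : ℕ), 0 ≤ a → (a ^ k : ℝ) ^ ((N:ℝ)⁻¹) = a ^ ((k:ℝ)/N) := by
      intro a k ha
      rw [← Real.rpow_natCast a k, ← Real.rpow_mul ha, div_eq_mul_inv]
    rw [Real.mul_rpow (pow_nonneg (le_of_lt hp0) _) (pow_nonneg (le_of_lt hp0') _),
        Real.mul_rpow (pow_nonneg hph0 _) (pow_nonneg hph1' _),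
        ea _ _ (le_of_lt hp0), ea _ _ (le_of_lt hp0'), ea _ _ hph0, ea _ _ hph1'] at this
    convert this using 3
    push_cast
    ring
  -- limits of exponents
  have hone : ∀ᶠ N : ℕ in atTop, ((n N : ℝ)/N + (m N : ℝ)/N + (r N : ℝ)/N) = 1 := by
    filter_upwards [eventually_ge_atTop 1] with N hN
    have hNpos : (0:ℝ) < N := by exact_mod_cast hN
    field_simp
    exact_mod_cast hsum N
  have hm : Tendsto (fun N => (m N : ℝ) / N) atTop (nhds (1 - p₀)) := by
    have : Tendsto (fun N => 1 - (n N : ℝ)/N - (r N : ℝ)/N) atTop (nhds (1 - p₀ - 0)) :=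
      (tendsto_const_nhds.sub hn).sub hr
    rw [sub_zero] at this
    apply this.congr'
    filter_upwards [hone] with N hN
    linarith
  have hmr : Tendsto (fun N => ((m N : ℝ) + r N) / N) atTop (nhds (1 - p₀)) := by
    have : Tendsto (fun N => (m N : ℝ)/N + (r N : ℝ)/N) atTop (nhds ((1 - p₀) + 0)) :=
      hm.add hr
    rw [add_zero] at this
    apply this.congr
    intro N; rw [add_div]
  -- Step 3: subsequence argument
  apply tendsto_of_subseq_tendsto
  intro ns hns
  obtain ⟨q, hqmem, φ, hφ, hconv⟩ :=
    (isCompact_Icc (a := (0:ℝ)) (b := 1)).tendsto_subseq (fun k => hmem (ns k))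
  refine ⟨φ, ?_⟩
  have hNs : Tendsto (fun k => ns (φ k)) atTop atTop :=
    hns.comp hφ.tendsto_atTop
  -- it suffices to show q = p₀
  suffices hqp : q = p₀ by
    rw [← hqp]; exact hconv
  by_contra hne
  have hLlim : Tendsto (fun k => phat (ns (φ k)) ^ ((n (ns (φ k)) : ℝ)/(ns (φ k))) *
      (1 - phat (ns (φ k))) ^ ((m (ns (φ k)) : ℝ)/(ns (φ k)))) atTop
      (nhds (q ^ p₀ * (1 - q) ^ (1 - p₀))) := by
    apply Tendsto.mul
    · exact Tendsto.rpow hconv (hn.comp hNs) (Or.inr hp0)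
    · exact Tendsto.rpow (tendsto_const_nhds.sub hconv) (hm.comp hNs) (Or.inr hp0')
  have hRlim : Tendsto (fun k => p₀ ^ ((n (ns (φ k)) : ℝ)/(ns (φ k))) *
      (1 - p₀) ^ (((m (ns (φ k)) : ℝ) + r (ns (φ k)))/(ns (φ k)))) atTop
      (nhds (p₀ ^ p₀ * (1 - p₀) ^ (1 - p₀))) := by
    apply Tendsto.mul
    · exact Tendsto.rpow tendsto_const_nhds (hn.comp hNs) (Or.inl (ne_of_gt hp0))
    · exact Tendsto.rpow tendsto_const_nhds (hmr.comp hNs) (Or.inl (ne_of_gt hp0'))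
  have hineq : p₀ ^ p₀ * (1 - p₀) ^ (1 - p₀) ≤ q ^ p₀ * (1 - q) ^ (1 - p₀) := by
    apply le_of_tendsto_of_tendsto hRlim hLlim
    filter_upwards [hNs.eventually (eventually_ge_atTop 1)] with k hk
    exact keyR _ hk
  exact absurd hineq (not_le.2 (stmt_6_aux p₀ ⟨hp0, hp1⟩ q hqmem hne))
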